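/- In a maximally delayed gflow (g,≺) of a labelled open graph, every vertex u in the second layer V_1^≺ has correction set contained in O ∪ {u}, i.e. g(u) ⊆ O ∪ {u}. -/

import Mathlib

open Set

/-- The three measurement planes. -/
inductive MPlane | XY | XZ | YZ
deriving DecidableEq

/-- The odd neighbourhood of a set `K`: vertices with an odd number of neighbours in `K`. -/
def oddNbhd {V : Type*} (G : SimpleGraph V) (K : Set V) : Set V :=
  {u | Odd (K ∩ G.neighborSet u).ncard}

/-- `(g, prec)` is a gflow for the labelled open graph `(G, I, O, lam)`. -/
structure GFlow {V : Type*} (G : SimpleGraph V) (I O : Set V) (lam : V → MPlane)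
    (g : V → Set V) (prec : V → V → Prop) : Prop where
  irrefl : ∀ v, ¬ prec v v
  trans : ∀ u v w, prec u v → prec v w → prec u w
  noInput : ∀ v, v ∉ O → g v ∩ I = ∅
  g1 : ∀ v, v ∉ O → ∀ w ∈ g v, w ≠ v → prec v w
  g2 : ∀ v, v ∉ O → ∀ w ∈ oddNbhd G (g v), w ≠ v → prec v w
  gXY : ∀ v, v ∉ O → lam v = MPlane.XY → v ∉ g v ∧ v ∈ oddNbhd G (g v)
  gXZ : ∀ v, v ∉ O → lam v = MPlane.XZ → v ∈ g v ∧ v ∈ oddNbhd G (g v)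
  gYZ : ∀ v, v ∉ O → lam v = MPlane.YZ → v ∈ g v ∧ v ∉ oddNbhd G (g v)

/-- The `prec`-maximal elements of a set `X`. -/
def maxElems {V : Type*} (prec : V → V → Prop) (X : Set V) : Set V :=
  {u ∈ X | ∀ v ∈ X, ¬ prec u v}

/-- The union `V_0^≺ ∪ ⋯ ∪ V_{k-1}^≺` of the first `k` layers of `prec`. -/
def layersBelow {V : Type*} (prec : V → V → Prop) : ℕ → Set V
  | 0 => ∅
  | k + 1 => layersBelow prec k ∪ maxElems prec (layersBelow prec k)ᶜ

/-- The layer `V_k^≺ = max_≺ (V ∖ ∪_{i<k} V_i^≺)`. -/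
def layer {V : Type*} (prec : V → V → Prop) (k : ℕ) : Set V :=
  maxElems prec (layersBelow prec k)ᶜ

/-- `(·,p)` is more delayed than `(·,q)`: the cumulative layer sizes of `p`
dominate those of `q`, strictly somewhere. -/
def MoreDelayed {V : Type*} (p q : V → V → Prop) : Prop :=
  (∀ k, (layersBelow q k).ncard ≤ (layersBelow p k).ncard) ∧
  (∃ k, (layersBelow q k).ncard < (layersBelow p k).ncard)

/-- `(g, prec)` is a maximally delayed gflow of `(G, I, O, lam)`. -/
def MaximallyDelayed {V : Type*} (G : SimpleGraph V) (I O : Set V) (lam : V → MPlane)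
    (g : V → Set V) (prec : V → V → Prop) : Prop :=
  GFlow G I O lam g prec ∧
  ∀ g' prec', GFlow G I O lam g' prec' → ¬ MoreDelayed prec' prec

/-! ### Auxiliary lemmas -/

theorem oddNbhd_empty {V : Type*} (G : SimpleGraph V) : oddNbhd G (∅ : Set V) = ∅ := by
  ext u; simp [oddNbhd]

theorem oddNbhd_singleton {V : Type*} (G : SimpleGraph V) (v : V) :
    oddNbhd G {v} = G.neighborSet v := by
  ext u
  simp only [oddNbhd, mem_setOf_eq, SimpleGraph.mem_neighborSet]
  constructor
  · intro h
    by_contra hadj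
    have he : ({v} : Set V) ∩ G.neighborSet u = ∅ := by
      rw [eq_empty_iff_forall_notMem]
      rintro x ⟨hx, h2⟩
      rw [mem_singleton_iff] at hx; subst hx
      exact hadj (G.adj_symm h2)
    rw [he] at h; simp at h
  · intro h
    have he : ({v} : Set V) ∩ G.neighborSet u = {v} := by
      ext x
      simp only [mem_inter_iff, mem_singleton_iff, SimpleGraph.mem_neighborSet]
      constructor
      · rintro ⟨hx, _⟩; exact hx
      · rintro rfl; exact ⟨rfl, G.adj_symm h⟩
    rw [he]; simp

/-- In any gflow (of a labelled open graph each of whose components meets `I ∪ O`),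
the zeroth layer is contained in `O`. -/
theorem gflow_layer_zero_subset {V : Type*} (G : SimpleGraph V) (I O : Set V)
    (lam : V → MPlane) (g : V → Set V) (prec : V → V → Prop)
    (hf : GFlow G I O lam g prec)
    (hcomp : ∀ v : V, ∃ w ∈ I ∪ O, G.Reachable v w) :
    maxElems prec (∅ : Set V)ᶜ ⊆ O := by
  intro v hv
  obtain ⟨-, hmax⟩ := hv
  by_contra hvO
  have hmax' : ∀ w, ¬ prec v w := fun w => hmax w (by simp)
  -- g v ⊆ {v}
  have hg_sub : g v ⊆ {v} := by
    intro w hw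
    by_contra hwv
    exact hmax' w (hf.g1 v hvO w hw (by simpa using hwv))
  have hodd_sub : oddNbhd G (g v) ⊆ {v} := by
    intro w hw
    by_contra hwv
    exact hmax' w (hf.g2 v hvO w hw (by simpa using hwv))
  cases hlam : lam v with
  | XY =>
    obtain ⟨hvg, hvodd⟩ := hf.gXY v hvO hlam
    have : g v = ∅ := by
      rw [eq_empty_iff_forall_notMem]
      intro x hx
      have := hg_sub hx
      rw [mem_singleton_iff] at this; subst this
      exact hvg hx
    rw [this, oddNbhd_empty] at hvodd
    exact hvodd
  | XZ =>
    obtain ⟨hvg, hvodd⟩ := hf.gXZ v hvO hlam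
    have hgv : g v = {v} := Subset.antisymm hg_sub (by simpa using hvg)
    rw [hgv, oddNbhd_singleton] at hvodd
    exact G.loopless.irrefl v hvodd
  | YZ =>
    obtain ⟨hvg, hvodd⟩ := hf.gYZ v hvO hlam
    have hgv : g v = {v} := Subset.antisymm hg_sub (by simpa using hvg)
    rw [hgv, oddNbhd_singleton] at hodd_sub
    -- v has no neighbours
    have hnone : ∀ x, ¬ G.Adj v x := by
      intro x hx
      have := hodd_sub hx
      rw [this] at hx
      exact G.loopless.irrefl _ hx
    obtain ⟨w, hwIO, hreach⟩ := hcomp v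
    have hwv : w = v := by
      obtain ⟨p⟩ := hreach
      cases p with
      | nil => rfl
      | cons ha _ => exact absurd ha (hnone _)
    subst hwv
    rcases hwIO with hI | hO
    · have : w ∈ g w ∩ I := ⟨hvg, hI⟩
      rw [hf.noInput w hvO] at this
      exact this
    · exact hvO hO

/-- In a maximally delayed gflow, `O` is contained in the zeroth layer. -/
theorem maximallyDelayed_output_subset {V : Type*} [Fintype V]
    (G : SimpleGraph V) (I O : Set V) (lam : V → MPlane)
    (g : V → Set V) (prec : V → V → Prop)
    (h : MaximallyDelayed G I O lam g prec) :
    O ⊆ maxElems prec (∅ : Set V)ᶜ := by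
  obtain ⟨hf, hmaxd⟩ := h
  intro o hoO
  refine ⟨by simp, ?_⟩
  intro w _ hprec
  -- build a more delayed gflow
  set r : V → V → Prop := fun a b => a ∉ O ∧ b ≠ a ∧ (b ∈ g a ∨ b ∈ oddNbhd G (g a)) with hr
  set prec' : V → V → Prop := Relation.TransGen r with hp
  have hr_sub : ∀ a b, r a b → prec a b := by
    rintro a b ⟨haO, hba, hb | hb⟩
    · exact hf.g1 a haO b hb hba
    · exact hf.g2 a haO b hb hba
  have hsub : ∀ a b, prec' a b → prec a b := by
    intro a b hab
    induction hab with
    | single h1 => exact hr_sub _ _ h1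
    | tail _ h2 ih => exact hf.trans _ _ _ ih (hr_sub _ _ h2)
  have hf' : GFlow G I O lam g prec' := by
    refine ⟨?_, ?_, hf.noInput, ?_, ?_, hf.gXY, hf.gXZ, hf.gYZ⟩
    · intro v hv; exact hf.irrefl v (hsub _ _ hv)
    · intro a b c h1 h2; exact h1.trans h2
    · intro v hv w hw hwv; exact Relation.TransGen.single ⟨hv, hwv, Or.inl hw⟩
    · intro v hv w hw hwv; exact Relation.TransGen.single ⟨hv, hwv, Or.inr hw⟩
  -- layersBelow monotone
  have hmono : ∀ k, layersBelow prec k ⊆ layersBelow prec' k := by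
    intro k
    induction k with
    | zero => simp [layersBelow]
    | succ k ih =>
      intro x hx
      rcases hx with hx | hx
      · exact Or.inl (ih hx)
      · by_cases hx' : x ∈ layersBelow prec' k
        · exact Or.inl hx'
        · refine Or.inr ⟨hx', ?_⟩
          intro v hv hpv
          exact hx.2 v (fun hvk => hv (ih hvk)) (hsub _ _ hpv)
  -- strict at level 1
  have ho' : o ∈ layersBelow prec' 1 := by
    refine Or.inr ⟨by simp [layersBelow], ?_⟩
    intro v _ hpv
    have hstep : ∀ a b, Relation.TransGen r a b → ∃ x, r a x := by
      intro a b hab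
      induction hab using Relation.TransGen.head_induction_on with
      | single h => exact ⟨_, h⟩
      | head h _ _ => exact ⟨_, h⟩
    obtain ⟨x, hx⟩ := hstep o v hpv
    exact hx.1 hoO
  have ho : o ∉ layersBelow prec 1 := by
    rintro (h0 | ⟨-, hm⟩)
    · simp [layersBelow] at h0
    · exact hm w (by simp [layersBelow]) hprec
  have hss : layersBelow prec 1 ⊂ layersBelow prec' 1 :=
    ⟨hmono 1, fun hsup => ho (hsup ho')⟩
  exact hmaxd g prec' hf'
    ⟨fun k => Set.ncard_le_ncard (hmono k) (Set.toFinite _),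
     ⟨1, Set.ncard_lt_ncard hss (Set.toFinite _)⟩⟩

/-- In a maximally delayed gflow, every vertex `u` in the second layer `V_1^≺`
has correction set contained in `O ∪ {u}`. -/
theorem maximallyDelayed_layer_one_correction {V : Type*} [Fintype V]
    (G : SimpleGraph V) (I O : Set V) (lam : V → MPlane)
    (g : V → Set V) (prec : V → V → Prop)
    (h : MaximallyDelayed G I O lam g prec)
    (hcomp : ∀ v : V, ∃ w ∈ I ∪ O, G.Reachable v w)
    (u : V) (hu : u ∈ layer prec 1) :
    g u ⊆ O ∪ {u} := by
  have hL1 : layersBelow prec 1 = O := by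
    have h1 : layersBelow prec 1 = maxElems prec (∅ : Set V)ᶜ := by
      simp [layersBelow]
    rw [h1]
    exact Subset.antisymm (gflow_layer_zero_subset G I O lam g prec h.1 hcomp)
      (maximallyDelayed_output_subset G I O lam g prec h)
  obtain ⟨huc, humax⟩ := hu
  rw [hL1] at huc humax
  have huO : u ∉ O := huc
  intro w hw
  by_cases hwu : w = u
  · exact Or.inr (by simp [hwu])
  · left
    by_contra hwO
    exact humax w hwO (h.1.g1 u huO w hw hwu)
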